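/- arXiv:1910.10412 — 4 statements merged into one kernel-verified Lean document; each statement's English description precedes it below -/
import Mathlib

section
/- Let G be a finite connected C4-free Helly graph with radius r ≥ 3 and diameter 2r − 1, let (x,y) be a diametral pair, let Z = {z : dist(z,x) = dist(z,y) = r}, and let w be a vertex with dist(w, L(x,r−1,y) ∪ L(y,r−1,x)) = r. Then dist(x,w) = dist(y,w) = 2r − 1 and dist(w,Z) = r − 1; moreover, Pr(w,Z) = L(w, r−1, x) ∩ L(w, r−1, y) and this set is a clique. -/
open SimpleGraph

variable {V : Type*}

/-- The ball of radius `r` centered at `v`. -/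
def gBall (G : SimpleGraph V) (v : V) (r : ℕ) : Set V := {u | G.dist v u ≤ r}

/-- A graph is Helly if every (nonempty) family of pairwise intersecting balls
has a nonempty common intersection. -/
def IsHelly (G : SimpleGraph V) : Prop :=
  ∀ F : Set (V × ℕ), F.Nonempty →
    (∀ p ∈ F, ∀ q ∈ F, (gBall G p.1 p.2 ∩ gBall G q.1 q.2).Nonempty) →
    (⋂ p ∈ F, gBall G p.1 p.2).Nonempty

/-- The eccentricity of a vertex. -/
noncomputable def ecc (G : SimpleGraph V) [Fintype V] (v : V) : ℕ :=
  Finset.univ.sup (fun u => G.dist v u)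

/-- The radius of a graph. -/
noncomputable def grad (G : SimpleGraph V) [Fintype V] : ℕ :=
  sInf (Set.range (ecc G))

/-- The diameter of a graph. -/
noncomputable def gdiam (G : SimpleGraph V) [Fintype V] : ℕ :=
  Finset.univ.sup (ecc G)

/-- The center of a graph: vertices of minimum eccentricity. -/
noncomputable def gcenter (G : SimpleGraph V) [Fintype V] : Set V :=
  {v | ecc G v = grad G}

/-- Distance from a vertex to a set of vertices. -/
noncomputable def distS (G : SimpleGraph V) (v : V) (S : Set V) : ℕ :=
  sInf (G.dist v '' S)

/-- The metric projection of a vertex onto a set of vertices. -/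
noncomputable def proj (G : SimpleGraph V) (v : V) (S : Set V) : Set V :=
  {s ∈ S | G.dist v s = distS G v S}

/-- The slice `L(u,k,v)`: vertices on the metric interval from `u` to `v`
at distance `k` from `u`. -/
def gslice (G : SimpleGraph V) (u : V) (k : ℕ) (v : V) : Set V :=
  {w | G.dist u w = k ∧ G.dist u w + G.dist w v = G.dist u v}

/-- A graph is `C₄`-free if it has no induced cycle on four vertices. -/
def C4Free (G : SimpleGraph V) : Prop :=
  ¬ ∃ a b c d : V, a ≠ b ∧ a ≠ c ∧ a ≠ d ∧ b ≠ c ∧ b ≠ d ∧ c ≠ d ∧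
    G.Adj a b ∧ G.Adj b c ∧ G.Adj c d ∧ G.Adj d a ∧ ¬ G.Adj a c ∧ ¬ G.Adj b d

/-- The open neighbourhood of a set: vertices outside it with a neighbour in it. -/
def nbhdSet (G : SimpleGraph V) (C : Set V) : Set V :=
  {v | v ∉ C ∧ ∃ c ∈ C, G.Adj v c}


lemma exists_mid {G : SimpleGraph V} (hconn : G.Connected) (a b : V) (k : ℕ)
    (hk : k ≤ G.dist a b) :
    ∃ u, G.dist a u = k ∧ G.dist a u + G.dist u b = G.dist a b := by
  induction k with
  | zero => exact ⟨a, by simp⟩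
  | succ n ih =>
    obtain ⟨u, hu1, hu2⟩ := ih (by omega)
    have hub : G.dist u b ≠ 0 := by omega
    obtain ⟨p, hp⟩ := (hconn u b).exists_walk_length_eq_dist
    cases p with
    | nil => simp at hp; omega
    | @cons _ u' _ h q =>
      have hq : G.dist u' b ≤ q.length := dist_le q
      have hlen : q.length + 1 = G.dist u b := by simpa using hp
      have h1 : G.dist u u' = 1 := dist_eq_one_iff_adj.mpr h
      have t1 : G.dist a u' ≤ G.dist a u + G.dist u u' := hconn.dist_triangle
      have t2 : G.dist a b ≤ G.dist a u' + G.dist u' b := hconn.dist_triangle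
      have t3 : G.dist a b ≤ G.dist a u + G.dist u b := by omega
      exact ⟨u', by omega, by omega⟩

lemma ball_inter {G : SimpleGraph V} (hconn : G.Connected) (a b : V) (m n : ℕ)
    (h : G.dist a b ≤ m + n) : (gBall G a m ∩ gBall G b n).Nonempty := by
  rcases le_or_gt (G.dist a b) m with h' | h'
  · refine ⟨b, ?_, ?_⟩
    · simpa [gBall] using h'
    · simp [gBall, SimpleGraph.dist_self]
  · obtain ⟨u, hu1, hu2⟩ := exists_mid hconn a b m h'.le
    have hcm : G.dist b u = G.dist u b := dist_comm ..
    refine ⟨u, ?_, ?_⟩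
    · simp only [gBall, Set.mem_setOf_eq]; omega
    · simp only [gBall, Set.mem_setOf_eq]; omega

lemma hellyFin {G : SimpleGraph V} (hH : IsHelly G) (hconn : G.Connected) {n : ℕ}
    (hn : 0 < n) (c : Fin n → V) (ρ : Fin n → ℕ)
    (hpair : ∀ i j, i ≠ j → G.dist (c i) (c j) ≤ ρ i + ρ j) :
    ∃ v, ∀ i, G.dist (c i) v ≤ ρ i := by
  obtain ⟨v, hv⟩ := hH (Set.range fun i => (c i, ρ i))
    ⟨_, ⟨⟨0, hn⟩, rfl⟩⟩ (by
      rintro p ⟨i, rfl⟩ q ⟨j, rfl⟩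
      by_cases hij : i = j
      · subst hij
        exact ⟨c i, by simp [gBall, SimpleGraph.dist_self], by simp [gBall, SimpleGraph.dist_self]⟩
      · exact ball_inter hconn _ _ _ _ (hpair i j hij))
  refine ⟨v, fun i => ?_⟩
  have := Set.mem_iInter₂.mp hv (c i, ρ i) ⟨i, rfl⟩
  simpa [gBall] using this


lemma helly3 {G : SimpleGraph V} (hH : IsHelly G) (hconn : G.Connected)
    (a b c : V) (m n p : ℕ)
    (hab : G.dist a b ≤ m + n) (hac : G.dist a c ≤ m + p) (hbc : G.dist b c ≤ n + p) :
    ∃ v, G.dist a v ≤ m ∧ G.dist b v ≤ n ∧ G.dist c v ≤ p := by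
  have c1 : G.dist b a = G.dist a b := SimpleGraph.dist_comm ..
  have c2 : G.dist c a = G.dist a c := SimpleGraph.dist_comm ..
  have c3 : G.dist c b = G.dist b c := SimpleGraph.dist_comm ..
  obtain ⟨v, hv⟩ := hellyFin hH hconn (by norm_num) ![a, b, c] ![m, n, p] (by
    intro i j hij
    fin_cases i <;> fin_cases j <;> simp at hij ⊢ <;> omega)
  exact ⟨v, by simpa using hv 0, by simpa using hv 1, by simpa using hv 2⟩

lemma helly5 {G : SimpleGraph V} (hH : IsHelly G) (hconn : G.Connected)
    (a b c d e : V) (m n p q s : ℕ)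
    (hab : G.dist a b ≤ m + n) (hac : G.dist a c ≤ m + p) (had : G.dist a d ≤ m + q)
    (hae : G.dist a e ≤ m + s) (hbc : G.dist b c ≤ n + p) (hbd : G.dist b d ≤ n + q)
    (hbe : G.dist b e ≤ n + s) (hcd : G.dist c d ≤ p + q) (hce : G.dist c e ≤ p + s)
    (hde : G.dist d e ≤ q + s) :
    ∃ v, G.dist a v ≤ m ∧ G.dist b v ≤ n ∧ G.dist c v ≤ p ∧
      G.dist d v ≤ q ∧ G.dist e v ≤ s := by
  have c1 : G.dist b a = G.dist a b := SimpleGraph.dist_comm ..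
  have c2 : G.dist c a = G.dist a c := SimpleGraph.dist_comm ..
  have c3 : G.dist c b = G.dist b c := SimpleGraph.dist_comm ..
  have c4 : G.dist d a = G.dist a d := SimpleGraph.dist_comm ..
  have c5 : G.dist d b = G.dist b d := SimpleGraph.dist_comm ..
  have c6 : G.dist d c = G.dist c d := SimpleGraph.dist_comm ..
  have c7 : G.dist e a = G.dist a e := SimpleGraph.dist_comm ..
  have c8 : G.dist e b = G.dist b e := SimpleGraph.dist_comm ..
  have c9 : G.dist e c = G.dist c e := SimpleGraph.dist_comm ..
  have c10 : G.dist e d = G.dist d e := SimpleGraph.dist_comm ..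
  obtain ⟨v, hv⟩ := hellyFin hH hconn (by norm_num) ![a, b, c, d, e] ![m, n, p, q, s] (by
    intro i j hij
    fin_cases i <;> fin_cases j <;> simp at hij ⊢ <;> omega)
  exact ⟨v, by simpa using hv 0, by simpa using hv 1, by simpa using hv 2,
    by simpa using hv 3, by simpa using hv 4⟩

set_option maxHeartbeats 1600000 in

lemma keyAdj {G : SimpleGraph V} (hH : IsHelly G) (hconn : G.Connected) (hC4 : C4Free G)
    (r : ℕ) (hr3 : 3 ≤ r) (x y w : V)
    (hxy' : G.dist x y = 2 * r - 1) (hxw : G.dist x w = 2 * r - 1)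
    (hyw : G.dist y w = 2 * r - 1)
    (hle : ∀ a b : V, G.dist a b ≤ 2 * r - 1) :
    ∀ k : ℕ, ∀ z1 z2 : V,
      (G.dist z1 x = r ∧ G.dist z1 y = r ∧ G.dist w z1 = r - 1) →
      (G.dist z2 x = r ∧ G.dist z2 y = r ∧ G.dist w z2 = r - 1) →
      G.dist z1 z2 ≤ k → z1 ≠ z2 → G.Adj z1 z2 := by
  have tri : ∀ a b c : V, G.dist a c ≤ G.dist a b + G.dist b c :=
    fun a b c => hconn.dist_triangle
  have hZlb : ∀ z : V, G.dist z x = r → r - 1 ≤ G.dist w z := by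
    intro z h1
    have t := tri x z w
    have c1 : G.dist x z = G.dist z x := SimpleGraph.dist_comm ..
    have c2 : G.dist z w = G.dist w z := SimpleGraph.dist_comm ..
    omega
  intro k
  induction k with
  | zero =>
    intro z1 z2 _ _ hle0 hcon
    exact absurd ((hconn.dist_eq_zero_iff).mp (Nat.le_zero.mp hle0)) hcon
  | succ n ih =>
    rintro z1 z2 ⟨h1x, h1y, h1w⟩ ⟨h2x, h2y, h2w⟩ hlek hne12
    rcases Nat.lt_or_ge (G.dist z1 z2) (n + 1) with hlt | hge
    · exact ih z1 z2 ⟨h1x, h1y, h1w⟩ ⟨h2x, h2y, h2w⟩ (by omega) hne12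
    have hd : G.dist z1 z2 = n + 1 := le_antisymm hlek hge
    by_cases hn0 : n = 0
    · exact dist_eq_one_iff_adj.mp (by omega)
    -- n ≥ 1 : produce s ∈ Pr(w,Z) with d(z1,s) ≤ 1 and d(s,z2) ≤ n
    have hd2 : G.dist z1 z2 = 2 := by
      have c6 : G.dist z1 w = G.dist w z1 := SimpleGraph.dist_comm ..
      have c7 : G.dist z2 w = G.dist w z2 := SimpleGraph.dist_comm ..
      have c8 : G.dist x w = 2 * r - 1 := hxw
      have c9 : G.dist y w = 2 * r - 1 := hyw
      have c10 : G.dist x y = 2 * r - 1 := hxy'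
      have e1 := hle z1 y
      have e2 := hle z2 y
      obtain ⟨s, hs0, hs1, hs2, hs3, hs4⟩ := helly5 hH hconn z1 z2 x y w 1 n r r (r - 1)
        (by omega) (by omega) (by omega) (by omega) (by omega)
        (by omega) (by omega) (by omega) (by omega) (by omega)
      have t1 := tri x s w
      have t2 := tri y s w
      have c1 : G.dist s w = G.dist w s := SimpleGraph.dist_comm ..
      have c2 : G.dist x s = G.dist s x := SimpleGraph.dist_comm ..
      have c3 : G.dist y s = G.dist s y := SimpleGraph.dist_comm ..
      have hsx : G.dist s x = r := by omega
      have hsy : G.dist s y = r := by omega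
      have hsw : G.dist w s = r - 1 := by have := hZlb s hsx; omega
      have hsne1 : s ≠ z1 := by
        intro h
        rw [h] at hs1
        have c4 : G.dist z2 z1 = G.dist z1 z2 := SimpleGraph.dist_comm ..
        omega
      have hdsz2 : G.dist s z2 ≤ 1 := by
        by_cases hsz2 : s = z2
        · subst hsz2; simp [SimpleGraph.dist_self]
        · have c4 : G.dist s z2 = G.dist z2 s := SimpleGraph.dist_comm ..
          have hadj := ih s z2 ⟨hsx, hsy, hsw⟩ ⟨h2x, h2y, h2w⟩ (by omega) hsz2
          have := dist_eq_one_iff_adj.mpr hadj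
          omega
      have t := tri z1 s z2
      omega
    -- now d(z1,z2) = 2 : contradiction via C4-freeness
    exfalso
    obtain ⟨u, hu0, hu1, hu2⟩ := helly3 hH hconn z1 z2 x 1 1 (r - 1)
      (by omega) (by omega) (by omega)
    have c1 : G.dist z1 w = G.dist w z1 := SimpleGraph.dist_comm ..
    have c2 : G.dist z2 w = G.dist w z2 := SimpleGraph.dist_comm ..
    obtain ⟨v, hv0, hv1, hv2⟩ := helly3 hH hconn z1 z2 w 1 1 (r - 2)
      (by omega) (by omega) (by omega)
    -- facts about u
    have tu1 := tri x u z1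
    have cu1 : G.dist u z1 = G.dist z1 u := SimpleGraph.dist_comm ..
    have cu2 : G.dist x z1 = G.dist z1 x := SimpleGraph.dist_comm ..
    have hux : G.dist x u = r - 1 := by omega
    have hune1 : u ≠ z1 := by intro h; subst h; omega
    have hune2 : u ≠ z2 := by
      intro h
      rw [h] at hux
      have c : G.dist x z2 = G.dist z2 x := SimpleGraph.dist_comm ..
      omega
    have hadj1u : G.Adj z1 u := by
      apply dist_eq_one_iff_adj.mp
      have hp := hconn.pos_dist_of_ne (Ne.symm hune1)
      omega
    have hadju2 : G.Adj u z2 := by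
      apply dist_eq_one_iff_adj.mp
      have hp := hconn.pos_dist_of_ne hune2
      have c : G.dist u z2 = G.dist z2 u := SimpleGraph.dist_comm ..
      omega
    -- facts about v
    have tv1 := tri x v w
    have cv1 : G.dist v w = G.dist w v := SimpleGraph.dist_comm ..
    have hvx : r + 1 ≤ G.dist x v := by omega
    have hvne1 : v ≠ z1 := by intro h; subst h; omega
    have hvne2 : v ≠ z2 := by intro h; subst h; omega
    have hadj2v : G.Adj z2 v := by
      apply dist_eq_one_iff_adj.mp
      have hp := hconn.pos_dist_of_ne (Ne.symm hvne2)
      have c : G.dist z2 v = G.dist v z2 := SimpleGraph.dist_comm ..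
      omega
    have hadjv1 : G.Adj v z1 := by
      apply dist_eq_one_iff_adj.mp
      have hp := hconn.pos_dist_of_ne hvne1
      have c : G.dist v z1 = G.dist z1 v := SimpleGraph.dist_comm ..
      omega
    have huv : u ≠ v := by intro h; subst h; omega
    have hnadj12 : ¬ G.Adj z1 z2 := by
      intro h
      have := dist_eq_one_iff_adj.mpr h
      omega
    have hnadjuv : ¬ G.Adj u v := by
      intro h
      have h1' := dist_eq_one_iff_adj.mpr h
      have t := tri x u v
      omega
    exact hC4 ⟨z1, u, z2, v, hadj1u.ne, hne12, hadjv1.ne', hadju2.ne, huv, hadj2v.ne,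
      hadj1u, hadju2, hadj2v, hadjv1, hnadj12, hnadjuv⟩

set_option maxHeartbeats 1600000 in
/-- In a finite connected C4-free Helly graph of radius `r ≥ 3` and
diameter `2r − 1`, if `(x,y)` is a diametral pair, `Z = {z : dist(z,x) = dist(z,y) = r}`
and `dist(w, L(x,r−1,y) ∪ L(y,r−1,x)) = r`, then `dist(x,w) = dist(y,w) = 2r − 1`,
`dist(w,Z) = r − 1`, and `Pr(w,Z) = L(w,r−1,x) ∩ L(w,r−1,y)` is a clique. -/
theorem stmt16 (G : SimpleGraph V) [Fintype V] (hconn : G.Connected) (hH : IsHelly G)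
    (hC4 : C4Free G) (r : ℕ) (hr3 : 3 ≤ r) (hrad : grad G = r)
    (hdiam : gdiam G = 2 * r - 1) (x y : V) (hxy : G.dist x y = gdiam G)
    (w : V) (hw : distS G w (gslice G x (r - 1) y ∪ gslice G y (r - 1) x) = r) :
    G.dist x w = 2 * r - 1 ∧ G.dist y w = 2 * r - 1 ∧
    distS G w {z | G.dist z x = r ∧ G.dist z y = r} = r - 1 ∧
    proj G w {z | G.dist z x = r ∧ G.dist z y = r} =
      gslice G w (r - 1) x ∩ gslice G w (r - 1) y ∧
    G.IsClique (proj G w {z | G.dist z x = r ∧ G.dist z y = r}) := by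
  have tri : ∀ a b c : V, G.dist a c ≤ G.dist a b + G.dist b c :=
    fun a b c => hconn.dist_triangle
  have hle : ∀ a b : V, G.dist a b ≤ 2 * r - 1 := by
    intro a b
    calc G.dist a b ≤ ecc G a := Finset.le_sup (Finset.mem_univ b)
      _ ≤ gdiam G := Finset.le_sup (Finset.mem_univ a)
      _ = 2 * r - 1 := hdiam
  have hxy' : G.dist x y = 2 * r - 1 := by rw [hxy, hdiam]
  have hw' : sInf (G.dist w '' (gslice G x (r - 1) y ∪ gslice G y (r - 1) x)) = r := hw
  -- every vertex of the two slices is at distance ≥ r from w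
  have hwAB : ∀ v, v ∈ gslice G x (r - 1) y ∪ gslice G y (r - 1) x → r ≤ G.dist w v := by
    intro v hv
    have hmem : G.dist w v ∈ G.dist w '' (gslice G x (r - 1) y ∪ gslice G y (r - 1) x) :=
      ⟨v, hv, rfl⟩
    have := Nat.sInf_le hmem
    omega
  -- Claim 1 : dist x w = 2r-1
  have hxw : G.dist x w = 2 * r - 1 := by
    by_contra hcon
    have h1 : G.dist x w ≤ 2 * r - 2 := by have := hle x w; omega
    have h2 := hle y w
    obtain ⟨v, hv0, hv1, hv2⟩ := helly3 hH hconn x y w (r - 1) r (r - 1)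
      (by omega) (by omega) (by omega)
    have t := tri x v y
    have c1 : G.dist v y = G.dist y v := SimpleGraph.dist_comm ..
    have hxv : G.dist x v = r - 1 := by omega
    have hsum : G.dist x v + G.dist v y = G.dist x y := by omega
    have := hwAB v (Or.inl ⟨hxv, hsum⟩)
    omega
  have hyw : G.dist y w = 2 * r - 1 := by
    by_contra hcon
    have h1 : G.dist y w ≤ 2 * r - 2 := by have := hle y w; omega
    have hyx : G.dist y x = 2 * r - 1 := by rw [SimpleGraph.dist_comm]; exact hxy'
    have h2 : G.dist x w ≤ 2 * r - 1 := by omega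
    obtain ⟨v, hv0, hv1, hv2⟩ := helly3 hH hconn y x w (r - 1) r (r - 1)
      (by omega) (by omega) (by omega)
    have t := tri y v x
    have c1 : G.dist v x = G.dist x v := SimpleGraph.dist_comm ..
    have hyv : G.dist y v = r - 1 := by omega
    have hsum : G.dist y v + G.dist v x = G.dist y x := by omega
    have := hwAB v (Or.inr ⟨hyv, hsum⟩)
    omega
  -- membership in Z forces distance ≥ r-1 from w
  have hZlb : ∀ z : V, G.dist z x = r → r - 1 ≤ G.dist w z := by
    intro z h1
    have t := tri x z w
    have c1 : G.dist x z = G.dist z x := SimpleGraph.dist_comm ..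
    have c2 : G.dist z w = G.dist w z := SimpleGraph.dist_comm ..
    omega
  -- a canonical Helly point in Pr(w,Z)
  have hz0 : ∃ z, G.dist z x = r ∧ G.dist z y = r ∧ G.dist w z = r - 1 := by
    have h2 : G.dist y w = 2 * r - 1 := hyw
    obtain ⟨z, hz1, hz2, hz3⟩ := helly3 hH hconn x y w r r (r - 1)
      (by omega) (by omega) (by omega)
    have t1 := tri x z w
    have t2 := tri y z w
    have c1 : G.dist z w = G.dist w z := SimpleGraph.dist_comm ..
    have c2 : G.dist x z = G.dist z x := SimpleGraph.dist_comm ..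
    have c3 : G.dist y z = G.dist z y := SimpleGraph.dist_comm ..
    have hzx : G.dist z x = r := by omega
    have := hZlb z hzx
    exact ⟨z, hzx, by omega, by omega⟩
  have key := keyAdj hH hconn hC4 r hr3 x y w hxy' hxw hyw hle
  -- distance from w to Z
  obtain ⟨z0, hz0x, hz0y, hz0w⟩ := hz0
  have hZim : (r - 1 : ℕ) ∈ G.dist w '' {z | G.dist z x = r ∧ G.dist z y = r} :=
    ⟨z0, ⟨hz0x, hz0y⟩, hz0w⟩
  have hdistS : distS G w {z | G.dist z x = r ∧ G.dist z y = r} = r - 1 := by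
    show sInf _ = r - 1
    refine le_antisymm (Nat.sInf_le hZim) ?_
    have hne : (G.dist w '' {z | G.dist z x = r ∧ G.dist z y = r}).Nonempty := ⟨_, hZim⟩
    obtain ⟨z, hz, hzm⟩ := Nat.sInf_mem hne
    rw [← hzm]
    exact hZlb z hz.1
  have hwx : G.dist w x = 2 * r - 1 := by rw [SimpleGraph.dist_comm]; exact hxw
  have hwy : G.dist w y = 2 * r - 1 := by rw [SimpleGraph.dist_comm]; exact hyw
  refine ⟨hxw, hyw, hdistS, ?_, ?_⟩
  · -- Pr(w,Z) = L(w,r-1,x) ∩ L(w,r-1,y)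
    ext z
    simp only [proj, gslice, Set.mem_setOf_eq, Set.mem_sep_iff, Set.mem_inter_iff,
      hdistS, hwx, hwy]
    constructor
    · rintro ⟨⟨hzx, hzy⟩, hzw⟩
      exact ⟨⟨hzw, by omega⟩, hzw, by omega⟩
    · rintro ⟨⟨hzw, hzx⟩, _, hzy⟩
      exact ⟨⟨by omega, by omega⟩, hzw⟩
  · -- the projection is a clique
    intro z1 hz1 z2 hz2 hne12
    simp only [proj, Set.mem_setOf_eq, Set.mem_sep_iff, hdistS] at hz1 hz2
    exact key (G.dist z1 z2) z1 z2 ⟨hz1.1.1, hz1.1.2, hz1.2⟩ ⟨hz2.1.1, hz2.1.2, hz2.2⟩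
      le_rfl hne12
end

section
/- Let G be a finite connected Helly graph, let A be a nonempty set of vertices, and let k ≥ 1 be an integer. If the intersection V' = ⋂_{a∈A} N^{k−1}[a] is nonempty, then ⋂_{a∈A} N^{k}[a] = N[V'], where N[V'] = ⋃_{v∈V'} N[v] is the set of vertices at distance at most 1 from V'. -/
open SimpleGraph

variable {V : Type*}

/-- In a finite connected Helly graph, for a nonempty vertex set `A`
and `k ≥ 1`, if `V' = ⋂_{a∈A} N^{k−1}[a]` is nonempty then
`⋂_{a∈A} N^{k}[a] = N[V']`. -/
theorem stmt17 (G : SimpleGraph V) [Fintype V] (hconn : G.Connected) (hH : IsHelly G)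
    (A : Set V) (hA : A.Nonempty) (k : ℕ) (hk : 1 ≤ k)
    (hne : (⋂ a ∈ A, gBall G a (k - 1)).Nonempty) :
    (⋂ a ∈ A, gBall G a k) = ⋃ v ∈ (⋂ a ∈ A, gBall G a (k - 1)), gBall G v 1 := by
  obtain ⟨x, hx⟩ := hne
  simp only [Set.mem_iInter] at hx
  ext u
  simp only [Set.mem_iInter, Set.mem_iUnion]
  constructor
  · intro hu
    -- build the family of balls
    set F : Set (V × ℕ) := ((fun a => (a, k - 1)) '' A) ∪ {(u, 1)} with hF
    -- key: for each a ∈ A, gBall a (k-1) ∩ gBall u 1 nonempty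
    have key : ∀ a ∈ A, (gBall G a (k - 1) ∩ gBall G u 1).Nonempty := by
      intro a ha
      by_cases h : G.dist a u ≤ k - 1
      · exact ⟨u, h, by simp [gBall, hconn.dist_eq_zero_iff.mpr rfl]⟩
      · have hau : G.dist a u = k := le_antisymm (hu a ha) (by omega)
        have hd : G.dist u a ≠ 0 := by rw [dist_comm]; omega
        obtain ⟨p, hp⟩ := exists_walk_of_dist_ne_zero hd
        cases p with
        | nil => simp at hd
        | cons h' q =>
          rename_i v
          refine ⟨v, ?_, ?_⟩
          · have h3 : G.dist v a ≤ q.length := dist_le q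
            have h4 : G.dist a v = G.dist v a := SimpleGraph.dist_comm
            have h5 : G.dist u a = k := by rw [SimpleGraph.dist_comm]; exact hau
            have hlen : q.length = k - 1 := by
              simp only [Walk.length_cons, h5] at hp; omega
            simp only [gBall, Set.mem_setOf_eq]
            omega
          · simp only [gBall, Set.mem_setOf_eq]
            have : G.dist u v = 1 := dist_eq_one_iff_adj.mpr h'
            omega
    have hFne : F.Nonempty := ⟨(u, 1), Or.inr rfl⟩
    have hpair : ∀ p ∈ F, ∀ q ∈ F, (gBall G p.1 p.2 ∩ gBall G q.1 q.2).Nonempty := by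
      rintro p hp q hq
      rcases hp with ⟨a, ha, rfl⟩ | hp <;> rcases hq with ⟨b, hb, rfl⟩ | hq
      · exact ⟨x, hx a ha, hx b hb⟩
      · simp only [Set.mem_singleton_iff] at hq; subst hq; exact key a ha
      · simp only [Set.mem_singleton_iff] at hp; subst hp
        obtain ⟨w, hw1, hw2⟩ := key b hb; exact ⟨w, hw2, hw1⟩
      · simp only [Set.mem_singleton_iff] at hp hq; subst hp; subst hq
        exact ⟨u, by simp [gBall, hconn.dist_eq_zero_iff.mpr rfl]⟩
    obtain ⟨w, hw⟩ := hH F hFne hpair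
    simp only [Set.mem_iInter] at hw
    refine ⟨w, fun a ha => hw (a, k - 1) (Or.inl ⟨a, ha, rfl⟩), ?_⟩
    have := hw (u, 1) (Or.inr rfl)
    simp only [gBall, Set.mem_setOf_eq] at this ⊢
    rwa [SimpleGraph.dist_comm]
  · rintro ⟨v, hv, huv⟩ a ha
    have h1 : G.dist a v ≤ k - 1 := hv a ha
    have h2 : G.dist v u ≤ 1 := huv
    calc G.dist a u ≤ G.dist a v + G.dist v u := hconn.dist_triangle
    _ ≤ k := by omega
end

section
/- Let G be a finite connected graph, let S be a clique of G, and let x and y be vertices lying in two different connected components of G − S. Then dist(x,S) + dist(y,S) ≤ dist(x,y) ≤ dist(x,S) + dist(y,S) + 1. -/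
open SimpleGraph

variable {V : Type*}

lemma walk_reach_induce (G : SimpleGraph V) (T : Set V) :
    ∀ {a b : V} (p : G.Walk a b) (h : ∀ v ∈ p.support, v ∈ T)
      (ha : a ∈ T) (hb : b ∈ T),
      (G.induce T).Reachable ⟨a, ha⟩ ⟨b, hb⟩ := by
  intro a b p
  induction p with
  | nil => intro _ _ _; rfl
  | cons hadj q ih =>
    intro h ha hb
    have h2 : ∀ v ∈ q.support, v ∈ T := fun v hv => h v (by simp [hv])
    have hmid : _ ∈ T := h2 _ q.start_mem_support
    have hadj' : (G.induce T).Adj ⟨_, ha⟩ ⟨_, hmid⟩ := by simpa using hadj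
    exact hadj'.reachable.trans (ih h2 hmid hb)


/-- In a finite connected graph `G`, if `S` is a clique and `x`, `y`
lie in different connected components of `G − S`, then
`dist(x,S) + dist(y,S) ≤ dist(x,y) ≤ dist(x,S) + dist(y,S) + 1`. -/
theorem stmt18 (G : SimpleGraph V) [Fintype V] (hconn : G.Connected)
    (S : Set V) (hS : G.IsClique S)
    (x y : V) (hx : x ∈ (Sᶜ : Set V)) (hy : y ∈ (Sᶜ : Set V))
    (hcomp : ¬ (G.induce (Sᶜ : Set V)).Reachable ⟨x, hx⟩ ⟨y, hy⟩) :
    distS G x S + distS G y S ≤ G.dist x y ∧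
    G.dist x y ≤ distS G x S + distS G y S + 1 := by
    classical
  obtain ⟨p, hp⟩ := hconn.exists_walk_length_eq_dist x y
  -- p must hit S
  have hhit : ∃ s ∈ p.support, s ∈ S := by
    by_contra hno
    push_neg at hno
    exact hcomp (walk_reach_induce G Sᶜ p (fun v hv => hno v hv) hx hy)
  obtain ⟨s, hs_sup, hsS⟩ := hhit
  have hSne : S.Nonempty := ⟨s, hsS⟩
  have hne : (G.dist x '' S).Nonempty := hSne.image _
  have hne' : (G.dist y '' S).Nonempty := hSne.image _
  constructor
  · -- lower bound
    have h1 : distS G x S ≤ G.dist x s := Nat.sInf_le ⟨s, hsS, rfl⟩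
    have h2 : distS G y S ≤ G.dist y s := Nat.sInf_le ⟨s, hsS, rfl⟩
    have hxs : G.dist x s ≤ (p.takeUntil s hs_sup).length := SimpleGraph.dist_le _
    have hsy : G.dist s y ≤ (p.dropUntil s hs_sup).length := SimpleGraph.dist_le _
    have hsum : (p.takeUntil s hs_sup).length + (p.dropUntil s hs_sup).length = p.length := by
      rw [← SimpleGraph.Walk.length_append, SimpleGraph.Walk.take_spec]
    have := hconn
    calc distS G x S + distS G y S ≤ G.dist x s + G.dist y s := Nat.add_le_add h1 h2
      _ = G.dist x s + G.dist s y := by rw [SimpleGraph.dist_comm (u := y) (v := s)]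
      _ ≤ p.length := by omega
      _ = G.dist x y := hp
  · -- upper bound
    obtain ⟨s1, hs1S, hs1⟩ := Nat.sInf_mem hne
    obtain ⟨t1, ht1S, ht1⟩ := Nat.sInf_mem hne'
    have hst : G.dist s1 t1 ≤ 1 := by
      rcases eq_or_ne s1 t1 with h | h
      · simp [h, SimpleGraph.dist_self]
      · exact le_of_eq (SimpleGraph.dist_eq_one_iff_adj.mpr (hS hs1S ht1S h))
    calc G.dist x y ≤ G.dist x s1 + G.dist s1 y := hconn.dist_triangle
      _ ≤ G.dist x s1 + (G.dist s1 t1 + G.dist t1 y) := by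
          exact Nat.add_le_add_left hconn.dist_triangle _
      _ ≤ G.dist x s1 + (1 + G.dist y t1) := by
          rw [SimpleGraph.dist_comm (u := t1) (v := y)]; omega
      _ = distS G x S + distS G y S + 1 := by simp only [distS]; omega
end

section
/- Let H' be a finite graph of VC-dimension at most d, and let H be a graph obtained from H' by adding two new vertices a and b with arbitrary adjacencies (to each other and to the vertices of H'), keeping all edges of H'. Then every set S of vertices shattered by H satisfies 2^{|S| − 2} − 2 ≤ Σ_{i=0}^{d} C(|S|, i), where C(n,i) denotes a binomial coefficient. -/
open SimpleGraph

variable {V : Type*}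

/-- A vertex set `S` is shattered by a graph `G` if every subset of `S` is the
trace on `S` of some closed neighbourhood. -/
def Shatters {W : Type*} (G : SimpleGraph W) (S : Set W) : Prop :=
  ∀ T ⊆ S, ∃ v : W, S ∩ {u | u = v ∨ G.Adj v u} = T

/-- Let `H` be a finite graph obtained from a graph `H'` of
VC-dimension at most `d` by adding two new vertices `a` and `b` with arbitrary
adjacencies (keeping all edges of `H'`, i.e. `H'` is the subgraph of `H` induced
on the vertices other than `a` and `b`). Then every set `S` shattered by `H`
satisfies `2^(|S| − 2) − 2 ≤ Σ_{i=0}^{d} C(|S|, i)`. -/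
theorem stmt19 (W : Type*) [Fintype W] (H : SimpleGraph W) (a b : W) (hab : a ≠ b)
    (d : ℕ)
    (hVC : ∀ S' : Set ({v : W | v ≠ a ∧ v ≠ b} : Set W),
      Shatters (H.induce {v : W | v ≠ a ∧ v ≠ b}) S' → S'.ncard ≤ d)
    (S : Set W) (hS : Shatters H S) :
    2 ^ (S.ncard - 2) - 2 ≤ ∑ i ∈ Finset.range (d + 1), (S.ncard).choose i := by
  classical
  set Sf : Finset W := S.toFinset with hSf
  have hSfS : (Sf : Set W) = S := Set.coe_toFinset S
  set S' : Finset W := Sf \ {a, b} with hS'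
  have hS'S : (S' : Set W) ⊆ S := by
    intro x hx
    rw [← hSfS]
    exact_mod_cast (Finset.sdiff_subset (Finset.mem_coe.1 hx))
  have haS' : a ∉ S' := by simp [hS']
  have hbS' : b ∉ S' := by simp [hS']
  set N : W → Finset W := fun v => S'.filter (fun u => u = v ∨ H.Adj v u) with hN
  set 𝒜 : Finset (Finset W) :=
    (Finset.univ.filter (fun v => v ≠ a ∧ v ≠ b)).image N with h𝒜
  -- Any subset of S' traced by H equals N v for the shattering witness v
  have key : ∀ t : Finset W, t ⊆ S' → ∃ v : W, N v = t := by
    intro t ht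
    have htS : (t : Set W) ⊆ S := fun x hx => hS'S (ht hx)
    obtain ⟨v, hv⟩ := hS (t : Set W) htS
    refine ⟨v, ?_⟩
    apply Finset.coe_injective
    have : (N v : Set W) = (S' : Set W) ∩ {u | u = v ∨ H.Adj v u} := by
      ext x; simp [hN]
    rw [this]
    apply Set.Subset.antisymm
    · intro x hx
      rw [← hv]
      exact ⟨hS'S hx.1, hx.2⟩
    · intro x hx
      have hx' : x ∈ S ∩ {u | u = v ∨ H.Adj v u} := by rw [hv]; exact_mod_cast hx
      exact ⟨Finset.mem_coe.2 (ht hx), hx'.2⟩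
  have hpow : S'.powerset ⊆ insert (N a) (insert (N b) 𝒜) := by
    intro t ht
    obtain ⟨v, hv⟩ := key t (Finset.mem_powerset.1 ht)
    by_cases hva : v = a
    · subst hva; simp [← hv]
    by_cases hvb : v = b
    · subst hvb; simp [← hv]
    · refine Finset.mem_insert.2 (Or.inr (Finset.mem_insert.2 (Or.inr ?_)))
      rw [h𝒜, Finset.mem_image]
      exact ⟨v, by simp [hva, hvb], hv⟩
  have hcount : 2 ^ S'.card ≤ 𝒜.card + 2 := by
    calc 2 ^ S'.card = S'.powerset.card := (Finset.card_powerset S').symm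
      _ ≤ (insert (N a) (insert (N b) 𝒜)).card := Finset.card_le_card hpow
      _ ≤ (insert (N b) 𝒜).card + 1 := Finset.card_insert_le _ _
      _ ≤ 𝒜.card + 1 + 1 := by
          have := Finset.card_insert_le (N b) 𝒜; omega
      _ = 𝒜.card + 2 := by omega
  -- Every set shattered by 𝒜 is a subset of S' of size ≤ d
  have hsh : ∀ s ∈ 𝒜.shatterer, s ⊆ S' ∧ s.card ≤ d := by
    intro s hs
    rw [Finset.mem_shatterer] at hs
    have hsub : s ⊆ S' := by
      obtain ⟨u, hu, hsu⟩ := hs.exists_superset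
      rw [h𝒜, Finset.mem_image] at hu
      obtain ⟨v, -, rfl⟩ := hu
      exact hsu.trans (Finset.filter_subset _ _)
    refine ⟨hsub, ?_⟩
    have hmem : ∀ x ∈ s, x ≠ a ∧ x ≠ b := by
      intro x hx
      have := hsub hx
      constructor
      · rintro rfl; exact haS' this
      · rintro rfl; exact hbS' this
    set Sset : Set ({v : W | v ≠ a ∧ v ≠ b} : Set W) := {x | ↑x ∈ s} with hSset
    have hshat : Shatters (H.induce {v : W | v ≠ a ∧ v ≠ b}) Sset := by
      intro T hT
      set t : Finset W := s.filter (fun u => ∃ x ∈ T, ↑x = u) with htdef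
      obtain ⟨u, hu, hsu⟩ := hs (Finset.filter_subset _ s : t ⊆ s)
      rw [h𝒜, Finset.mem_image] at hu
      obtain ⟨v, hvmem, rfl⟩ := hu
      simp only [Finset.mem_filter, Finset.mem_univ, true_and] at hvmem
      refine ⟨⟨v, hvmem⟩, ?_⟩
      ext x
      simp only [Set.mem_inter_iff, Set.mem_setOf_eq, hSset]
      constructor
      · rintro ⟨hxs, hx⟩
        have hxNv : (x : W) ∈ N v := by
          have : (x : W) = v ∨ H.Adj v x := by
            rcases hx with hx | hx
            · left; exact congrArg Subtype.val hx
            · right; exact hx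
          exact Finset.mem_filter.2 ⟨hsub hxs, this⟩
        have hxt : (x : W) ∈ t := by rw [htdef, ← hsu]; exact Finset.mem_inter.2 ⟨hxs, hxNv⟩
        obtain ⟨-, y, hy, hyx⟩ := Finset.mem_filter.1 hxt
        rwa [show x = y from Subtype.ext hyx.symm]
      · intro hxT
        have hxt : (x : W) ∈ t :=
          Finset.mem_filter.2 ⟨by exact hT hxT, x, hxT, rfl⟩
        have hxsu : (x : W) ∈ s ∩ N v := by rw [hsu]; exact hxt
        obtain ⟨hxs, hxNv⟩ := Finset.mem_inter.1 hxsu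
        refine ⟨hxs, ?_⟩
        rcases (Finset.mem_filter.1 hxNv).2 with h | h
        · left; exact Subtype.ext h
        · right; exact h
    have hcard := hVC Sset hshat
    have himg : Subtype.val '' Sset = (s : Set W) := by
      ext x
      constructor
      · rintro ⟨y, hy, rfl⟩; exact hy
      · intro hx; exact ⟨⟨x, hmem x hx⟩, hx, rfl⟩
    have : Sset.ncard = s.card := by
      rw [← Set.ncard_coe_finset, ← himg, Set.ncard_image_of_injective _ Subtype.val_injective]
    omega
  have hshsub : 𝒜.shatterer ⊆ (Finset.Iic d).biUnion (fun k => S'.powersetCard k) := by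
    intro s hs
    obtain ⟨h1, h2⟩ := hsh s hs
    exact Finset.mem_biUnion.2 ⟨s.card, Finset.mem_Iic.2 h2,
      Finset.mem_powersetCard.2 ⟨h1, rfl⟩⟩
  have hbiu : ((Finset.Iic d).biUnion (fun k => S'.powersetCard k)).card
      = ∑ k ∈ Finset.Iic d, (S'.card).choose k := by
    rw [Finset.card_biUnion, ]
    · exact Finset.sum_congr rfl (fun k _ => Finset.card_powersetCard k S')
    · intro i hi j hj hij
      rw [Function.onFun, Finset.disjoint_left]
      intro t hti htj
      exact hij ((Finset.mem_powersetCard.1 hti).2.symm.trans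
        (Finset.mem_powersetCard.1 htj).2)
  have hAle : 𝒜.card ≤ ∑ k ∈ Finset.Iic d, (S'.card).choose k := by
    calc 𝒜.card ≤ 𝒜.shatterer.card := Finset.card_le_card_shatterer 𝒜
      _ ≤ _ := by rw [← hbiu]; exact Finset.card_le_card hshsub
  have hIic : Finset.Iic d = Finset.range (d + 1) := by
    ext k; simp [Nat.lt_succ_iff]
  have hncard : S.ncard = Sf.card := Set.ncard_eq_toFinset_card' S
  have hS'le : S'.card ≤ S.ncard := by
    rw [hncard]; exact Finset.card_le_card (Finset.sdiff_subset)
  have hsum : ∑ k ∈ Finset.Iic d, (S'.card).choose k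
      ≤ ∑ i ∈ Finset.range (d + 1), (S.ncard).choose i := by
    rw [hIic]
    exact Finset.sum_le_sum (fun i _ => Nat.choose_le_choose i hS'le)
  have hS'ge : S.ncard - 2 ≤ S'.card := by
    have h1 : Sf.card - 2 ≤ S'.card := by
      rw [hS']
      have h2 := Finset.le_card_sdiff ({a, b} : Finset W) Sf
      have hab2 : ({a, b} : Finset W).card ≤ 2 := by
        have := Finset.card_insert_le a ({b} : Finset W); simpa using this
      omega
    omega
  have hpowle : 2 ^ (S.ncard - 2) ≤ 2 ^ S'.card :=
    Nat.pow_le_pow_right (by norm_num) hS'ge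
  calc 2 ^ (S.ncard - 2) - 2 ≤ 2 ^ S'.card - 2 := Nat.sub_le_sub_right hpowle 2
    _ ≤ 𝒜.card := Nat.sub_le_iff_le_add.2 hcount
    _ ≤ ∑ k ∈ Finset.Iic d, (S'.card).choose k := hAle
    _ ≤ ∑ i ∈ Finset.range (d + 1), (S.ncard).choose i := hsum
end
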